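/- For all M > 0 and all t ∈ (0,1), the inequality 21M²t² − (213M² − 72M + 12)t + (192M² − 72M + 12) ≥ 0 holds. -/
import Mathlib

theorem stmt_14 (M t : ℝ) (hM : 0 < M) (ht : t ∈ Set.Ioo (0:ℝ) 1) :
    0 ≤ 21 * M^2 * t^2 - (213 * M^2 - 72 * M + 12) * t + (192 * M^2 - 72 * M + 12) := by
  obtain ⟨ht0, ht1⟩ := ht
  nlinarith [mul_nonneg (sq_nonneg (19*M-4)) (sub_nonneg.2 ht1.le),
    mul_nonneg (mul_nonneg (sq_nonneg M) (sub_nonneg.2 ht1.le)) (sub_nonneg.2 ht1.le),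
    mul_nonneg (sq_nonneg M) (sub_nonneg.2 ht1.le), sq_nonneg (1-t)]
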